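/- If h has p-th derivative Lipschitz continuous with constant (p-1)!·L on [x, x+s], then ‖∇h(x+s) - ∇_s T_p(x,s)‖ ≤ L·‖s‖^p, where ∇_s T_p(x,s) denotes the gradient of the Taylor polynomial with respect to s. -/

import Mathlib

open scoped BigOperators

set_option maxHeartbeats 1000000
set_option linter.unusedSectionVars false

open Set Filter

section TaylorAux

variable {E : Type} [NormedAddCommGroup E] [NormedSpace ℝ E]

lemma iterSnoc {F : Type} [NormedAddCommGroup F] [NormedSpace ℝ F]
    (q : ℕ) (f : E → F) (x : E) (m : Fin q → E) (c : E) :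
    iteratedFDeriv ℝ (q+1) f x (Fin.snoc m c) =
      iteratedFDeriv ℝ q (fderiv ℝ f) x m c := by
  rw [iteratedFDeriv_succ_apply_right]
  simp

lemma updCast (q : ℕ) (s w : E) (i : Fin (q+1)) :
    Function.update (fun _ : Fin (q+2) => s) i.castSucc w
      = Fin.snoc (Function.update (fun _ : Fin (q+1) => s) i w) s := by
  funext k
  refine Fin.lastCases ?_ (fun k' => ?_) k
  · rw [Function.update_of_ne (Fin.castSucc_lt_last i).ne', Fin.snoc_last]
  · rw [Fin.snoc_castSucc, Function.update_apply, Function.update_apply]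
    simp [Fin.castSucc_inj]

lemma updLast (q : ℕ) (s w : E) :
    Function.update (fun _ : Fin (q+1) => s) (Fin.last q) w
      = Fin.snoc (fun _ : Fin q => s) w := by
  funext k
  refine Fin.lastCases ?_ (fun k' => ?_) k
  · rw [Function.update_self, Fin.snoc_last]
  · rw [Fin.snoc_castSucc, Function.update_of_ne (Fin.castSucc_lt_last k').ne]

lemma snocConst (q : ℕ) (s : E) :
    (Fin.snoc (fun _ : Fin q => s) s) = (fun _ : Fin (q+1) => s) := by
  funext k
  refine Fin.lastCases ?_ (fun k' => ?_) k
  · rw [Fin.snoc_last]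
  · rw [Fin.snoc_castSucc]

theorem iterFlip {F : Type} [NormedAddCommGroup F] [NormedSpace ℝ F]
    (q : ℕ) (B : E → (E →L[ℝ] E →L[ℝ] F))
    {U : Set E} (hU : IsOpen U) (hsym : ∀ y ∈ U, ∀ v w, B y v w = B y w v)
    {x : E} (hx : x ∈ U) (m : Fin q → E) (a b : E) :
    iteratedFDeriv ℝ q B x m a b = iteratedFDeriv ℝ q B x m b a := by
  set e := (ContinuousLinearMap.flipₗᵢ ℝ E E F).toContinuousLinearEquiv with he
  have hcoe : ∀ (A : E →L[ℝ] E →L[ℝ] F) (v w : E), e A v w = A w v := by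
    intro A v w
    simp only [he, LinearIsometryEquiv.coe_toContinuousLinearEquiv,
      ContinuousLinearMap.coe_flipₗᵢ, ContinuousLinearMap.flip_apply]
  have h2 : Set.EqOn B (⇑e ∘ B) U := by
    intro y hy
    ext v w
    rw [Function.comp_apply, hcoe]
    exact hsym y hy v w
  have h3 : iteratedFDeriv ℝ q B x = iteratedFDeriv ℝ q (⇑e ∘ B) x := by
    rw [← iteratedFDerivWithin_of_isOpen q hU hx, ← iteratedFDerivWithin_of_isOpen q hU hx]
    exact iteratedFDerivWithin_congr h2 hx q
  have h4 := ContinuousLinearEquiv.iteratedFDerivWithin_comp_left (𝕜 := ℝ) (F := E →L[ℝ] E →L[ℝ] F) (G := E →L[ℝ] E →L[ℝ] F) e B hU.uniqueDiffOn hx q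
  calc iteratedFDeriv ℝ q B x m a b
      = iteratedFDerivWithin ℝ q (⇑e ∘ B) U x m a b := by
        rw [h3, ← iteratedFDerivWithin_of_isOpen q hU hx]
    _ = e (iteratedFDerivWithin ℝ q B U x m) a b := by
        rw [h4]
        simp only [ContinuousLinearMap.compContinuousMultilinearMap_coe, Function.comp_apply,
          ContinuousLinearEquiv.coe_coe]
    _ = iteratedFDerivWithin ℝ q B U x m b a := hcoe _ _ _
    _ = iteratedFDeriv ℝ q B x m b a := by rw [iteratedFDerivWithin_of_isOpen q hU hx]

theorem sumUpd {U : Set E} (hU : IsOpen U) {x : E} (hx : x ∈ U) (s w : E) :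
    ∀ (j : ℕ) {F : Type} [NormedAddCommGroup F] [NormedSpace ℝ F] (f : E → F),
    ContDiffOn ℝ (j+1) f U →
    ∑ i : Fin (j+1), iteratedFDeriv ℝ (j+1) f x (Function.update (fun _ => s) i w)
      = (j+1) • (iteratedFDeriv ℝ j (fderiv ℝ f) x (fun _ => s) w) := by
  intro j
  induction j with
  | zero =>
    intro F _ _ f hf
    rw [Fin.sum_univ_one]
    have h1 : Function.update (fun _ : Fin 1 => s) 0 w = fun _ => w := by
      funext k
      rw [Subsingleton.elim k 0, Function.update_self]
    rw [h1, iteratedFDeriv_one_apply]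
    simp [iteratedFDeriv_zero_apply]
  | succ j ih =>
    intro F _ _ f hf
    set g := fderiv ℝ f with hg
    have hgC : ContDiffOn ℝ (j+1) g U := by
      apply hf.fderiv_of_isOpen hU
      norm_cast
    have hsym : ∀ y ∈ U, ∀ v w', fderiv ℝ g y v w' = fderiv ℝ g y w' v := by
      intro y hy v w'
      have h2 : ContDiffAt ℝ ((j+1)+1 : ℕ) f y := hf.contDiffAt (hU.mem_nhds hy)
      have := h2.isSymmSndFDerivAt (by rw [minSmoothness_of_isRCLikeNormedField]; exact_mod_cast Nat.le_add_left 2 j)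
      exact this v w'
    rw [Fin.sum_univ_castSucc]
    set X := iteratedFDeriv ℝ (j+1) g x (fun _ => s) w with hX
    have hsum : ∑ i : Fin (j+1),
        iteratedFDeriv ℝ (j+1+1) f x (Function.update (fun _ => s) i.castSucc w)
        = (j+1) • X := by
      calc ∑ i : Fin (j+1),
          iteratedFDeriv ℝ (j+1+1) f x (Function.update (fun _ => s) i.castSucc w)
          = ∑ i : Fin (j+1), iteratedFDeriv ℝ (j+1) g x (Function.update (fun _ => s) i w) s := by
            refine Finset.sum_congr rfl (fun i _ => ?_)
            rw [updCast, iterSnoc]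
        _ = (∑ i : Fin (j+1), iteratedFDeriv ℝ (j+1) g x (Function.update (fun _ => s) i w)) s := by
            rw [ContinuousLinearMap.sum_apply]
        _ = ((j+1) • (iteratedFDeriv ℝ j (fderiv ℝ g) x (fun _ => s) w)) s := by
            rw [ih g hgC]
        _ = (j+1) • (iteratedFDeriv ℝ j (fderiv ℝ g) x (fun _ => s) w s) := by
            rw [ContinuousLinearMap.smul_apply]
        _ = (j+1) • (iteratedFDeriv ℝ j (fderiv ℝ g) x (fun _ => s) s w) := by
            rw [iterFlip j (fderiv ℝ g) hU hsym hx]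
        _ = (j+1) • (iteratedFDeriv ℝ (j+1) g x (Fin.snoc (fun _ => s) s) w) := by
            rw [iterSnoc]
        _ = (j+1) • X := by rw [snocConst, hX]
    have hlast : iteratedFDeriv ℝ (j+1+1) f x
        (Function.update (fun _ => s) (Fin.last (j+1)) w) = X := by
      rw [updLast, iterSnoc, hX]
    rw [hsum, hlast, succ_nsmul X (j+1), succ_nsmul X j]

theorem taylorAux {U : Set E} (hU : IsOpen U) (x s : E)
    (hseg : segment ℝ x (x + s) ⊆ U) :
    ∀ (q : ℕ) {F : Type} [NormedAddCommGroup F] [NormedSpace ℝ F] (f : E → F) (M : ℝ),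
    0 ≤ M → ContDiffOn ℝ q f U →
    (∀ y ∈ segment ℝ x (x + s), ∀ z ∈ segment ℝ x (x + s),
      ‖iteratedFDeriv ℝ q f y - iteratedFDeriv ℝ q f z‖ ≤ M * ‖y - z‖) →
    ∀ t ∈ Icc (0:ℝ) 1,
      ‖f (x + t • s) - ∑ j ∈ Finset.range (q+1),
          (t^j / (Nat.factorial j : ℝ)) • iteratedFDeriv ℝ j f x (fun _ => s)‖
        ≤ M * ‖s‖^(q+1) * t^(q+1) / (Nat.factorial q : ℝ) := by
  have hmem : ∀ t ∈ Icc (0:ℝ) 1, x + t • s ∈ segment ℝ x (x + s) := by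
    intro t ht
    rw [segment_eq_image']
    exact ⟨t, ht, by rw [add_sub_cancel_left]⟩
  intro q
  induction q with
  | zero =>
    intro F _ _ f M hM hf hlip t ht
    have key : ∀ y z : E, ‖iteratedFDeriv ℝ 0 f y - iteratedFDeriv ℝ 0 f z‖ = ‖f y - f z‖ := by
      intro y z
      rw [← LinearIsometryEquiv.norm_map (continuousMultilinearCurryFin0 ℝ E F), map_sub]
      simp [continuousMultilinearCurryFin0_apply, iteratedFDeriv_zero_apply]
    have h0 := hlip (x + t • s) (hmem t ht) x (left_mem_segment ℝ x (x + s))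
    rw [key] at h0
    have h1 : x + t • s - x = t • s := by abel
    rw [h1, norm_smul, Real.norm_eq_abs, abs_of_nonneg ht.1] at h0
    simpa [Finset.sum_range_one, iteratedFDeriv_zero_apply] using
      h0.trans (le_of_eq (by ring))
  | succ q ih =>
    intro F _ _ f M hM hf hlip t ht
    set g := fderiv ℝ f with hgdef
    have hgC : ContDiffOn ℝ q g U := by
      apply hf.fderiv_of_isOpen hU
      norm_cast
    have hfac : (Nat.factorial q : ℝ) ≠ 0 := Nat.cast_ne_zero.2 q.factorial_ne_zero
    have hrwg : ∀ y : E, iteratedFDeriv ℝ q g y =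
        (continuousMultilinearCurryRightEquiv' ℝ q E F) (iteratedFDeriv ℝ (q+1) f y) := by
      intro y
      rw [iteratedFDeriv_succ_eq_comp_right, Function.comp_apply,
        LinearIsometryEquiv.apply_symm_apply]
    have hlip' : ∀ y ∈ segment ℝ x (x + s), ∀ z ∈ segment ℝ x (x + s),
        ‖iteratedFDeriv ℝ q g y - iteratedFDeriv ℝ q g z‖ ≤ M * ‖y - z‖ := by
      intro y hy z hz
      rw [hrwg y, hrwg z, ← dist_eq_norm, LinearIsometryEquiv.dist_map, dist_eq_norm]
      exact hlip y hy z hz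
    set c : ℕ → F := fun j => iteratedFDeriv ℝ j f x (fun _ => s) with hc
    set d : ℕ → (E →L[ℝ] F) := fun k => iteratedFDeriv ℝ k g x (fun _ => s) with hd
    have hcd : ∀ k : ℕ, c (k+1) = d k s := by
      intro k
      show iteratedFDeriv ℝ (k+1) f x (fun _ => s) = iteratedFDeriv ℝ k g x (fun _ => s) s
      rw [← snocConst k s, iterSnoc]
    set φ : ℝ → F := fun r => f (x + r • s) - ∑ j ∈ Finset.range (q+2),
      (r^j / (Nat.factorial j : ℝ)) • c j with hφ
    set φ' : ℝ → F := fun r => g (x + r • s) s - ∑ k ∈ Finset.range (q+1),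
      (r^k / (Nat.factorial k : ℝ)) • (d k s) with hφ'
    have hder : ∀ r ∈ Icc (0:ℝ) 1, HasDerivAt φ (φ' r) r := by
      intro r hr
      have hpath : HasDerivAt (fun r : ℝ => x + r • s) s r := by
        simpa using ((hasDerivAt_id r).smul_const s).const_add x
      have hdiff : DifferentiableAt ℝ f (x + r • s) :=
        (hf.contDiffAt (hU.mem_nhds (hseg (hmem r hr)))).differentiableAt
          (by simp)
      have part1 : HasDerivAt (fun r : ℝ => f (x + r • s)) (g (x + r • s) s) r :=
        hdiff.hasFDerivAt.comp_hasDerivAt r hpath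
      have part2 : HasDerivAt (fun r : ℝ => ∑ j ∈ Finset.range (q+2),
          (r^j / (Nat.factorial j : ℝ)) • c j)
          (∑ j ∈ Finset.range (q+2), ((j * r^(j-1)) / (Nat.factorial j : ℝ)) • c j) r := by
        apply HasDerivAt.fun_sum
        intro j _
        exact ((hasDerivAt_pow j r).div_const (Nat.factorial j : ℝ)).smul_const (c j)
      have hsum_eq : ∑ j ∈ Finset.range (q+2), ((j * r^(j-1)) / (Nat.factorial j : ℝ)) • c j
          = ∑ k ∈ Finset.range (q+1), (r^k / (Nat.factorial k : ℝ)) • (d k s) := by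
        rw [Finset.sum_range_succ']
        have h0 : (((0:ℕ) : ℝ) * r^(0-1) / (Nat.factorial 0 : ℝ)) • c 0 = 0 := by
          simp
        rw [h0, add_zero]
        refine Finset.sum_congr rfl (fun i _ => ?_)
        rw [hcd i]
        congr 1
        have hfi : (Nat.factorial i : ℝ) ≠ 0 := Nat.cast_ne_zero.2 i.factorial_ne_zero
        rw [Nat.factorial_succ]
        push_cast
        field_simp
      have := part1.sub (hsum_eq ▸ part2)
      exact this
    have hcont : ContinuousOn φ (Icc 0 1) := by
      apply ContinuousOn.sub
      · exact hf.continuousOn.comp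
          ((continuous_const.add (continuous_id.smul continuous_const)).continuousOn)
          (fun r hr => hseg (hmem r hr))
      · exact (continuous_finset_sum _ fun j _ =>
          ((continuous_pow j).div_const _).smul continuous_const).continuousOn
    set B : ℝ → ℝ := fun r => (M * ‖s‖^(q+2) / ((Nat.factorial q : ℝ) * (q+2))) * r^(q+2)
      with hB0
    set B' : ℝ → ℝ := fun r => (M * ‖s‖^(q+2) / (Nat.factorial q : ℝ)) * r^(q+1) with hB'0
    have hB : ∀ r : ℝ, HasDerivAt B (B' r) r := by
      intro r
      have h := (hasDerivAt_pow (q+2) r).const_mul (M * ‖s‖^(q+2) / ((Nat.factorial q : ℝ) * (q+2)))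
      convert h using 1
      show (M * ‖s‖^(q+2) / (Nat.factorial q : ℝ)) * r^(q+1)
        = M * ‖s‖^(q+2) / ((Nat.factorial q : ℝ) * (q+2)) * (((q+2):ℕ) * r^(q+2-1))
      push_cast [Nat.add_sub_cancel]
      have : (q:ℝ)+2 ≠ 0 := by positivity
      field_simp
      all_goals rfl
    have ha : ‖φ 0‖ ≤ B 0 := by
      have hφ0 : φ 0 = 0 := by
        rw [hφ]
        simp only
        rw [Finset.sum_eq_single_of_mem 0 (Finset.mem_range.2 (Nat.succ_pos _))
          (fun j _ hj0 => by simp [zero_pow hj0])]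
        simp [hc, iteratedFDeriv_zero_apply]
      rw [hφ0]
      simp [hB0, zero_pow]
    have bound : ∀ r ∈ Ico (0:ℝ) 1, ‖φ' r‖ ≤ B' r := by
      intro r hr
      set A : E →L[ℝ] F := g (x + r • s) - ∑ k ∈ Finset.range (q+1),
        (r^k / (Nat.factorial k : ℝ)) • d k with hA
      have hAs : φ' r = A s := by
        rw [hφ', hA]
        simp [ContinuousLinearMap.sub_apply, ContinuousLinearMap.sum_apply,
          ContinuousLinearMap.smul_apply]
      have hAnorm : ‖A‖ ≤ M * ‖s‖^(q+1) * r^(q+1) / (Nat.factorial q : ℝ) := by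
        have := ih g M hM hgC hlip' r ⟨hr.1, hr.2.le⟩
        simpa [hA, hd] using this
      rw [hAs]
      calc ‖A s‖ ≤ ‖A‖ * ‖s‖ := A.le_opNorm s
        _ ≤ (M * ‖s‖^(q+1) * r^(q+1) / (Nat.factorial q : ℝ)) * ‖s‖ :=
            mul_le_mul_of_nonneg_right hAnorm (norm_nonneg s)
        _ = B' r := by
            rw [hB'0]
            show M * ‖s‖^(q+1) * r^(q+1) / (Nat.factorial q : ℝ) * ‖s‖
              = M * ‖s‖^(q+2) / (Nat.factorial q : ℝ) * r^(q+1)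
            rw [show q+2 = (q+1)+1 from rfl, pow_succ]
            ring
    have main : ∀ ⦃r⦄, r ∈ Icc (0:ℝ) 1 → ‖φ r‖ ≤ B r :=
      image_norm_le_of_norm_deriv_right_le_deriv_boundary hcont
        (fun r hr => (hder r ⟨hr.1, hr.2.le⟩).hasDerivWithinAt) ha hB bound
    have hBle : B t ≤ M * ‖s‖^(q+1+1) * t^(q+1+1) / (Nat.factorial (q+1) : ℝ) := by
      rw [hB0]
      have hN : 0 ≤ M * ‖s‖^(q+2) * t^(q+2) :=
        mul_nonneg (mul_nonneg hM (pow_nonneg (norm_nonneg s) _)) (pow_nonneg ht.1 _)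
      have h1 : ((Nat.factorial (q+1) : ℝ)) ≤ (Nat.factorial q : ℝ) * (q+2) := by
        rw [Nat.factorial_succ]
        push_cast
        nlinarith [(Nat.cast_pos (α := ℝ)).2 q.factorial_pos]
      have h2 : (0:ℝ) < (Nat.factorial (q+1) : ℝ) := Nat.cast_pos.2 (q+1).factorial_pos
      calc M * ‖s‖^(q+2) / ((Nat.factorial q : ℝ) * (q+2)) * t^(q+2)
          = (M * ‖s‖^(q+2) * t^(q+2)) / ((Nat.factorial q : ℝ) * (q+2)) := by ring
        _ ≤ (M * ‖s‖^(q+2) * t^(q+2)) / (Nat.factorial (q+1) : ℝ) :=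
            div_le_div_of_nonneg_left hN h2 h1
        _ = M * ‖s‖^(q+1+1) * t^(q+1+1) / (Nat.factorial (q+1) : ℝ) := by norm_num
    exact (main ht).trans hBle

end TaylorAux

theorem stmt1 (n p : ℕ) (hp : 1 ≤ p) (L : ℝ) (hL : 0 ≤ L)
    (h : EuclideanSpace ℝ (Fin n) → ℝ) (x s : EuclideanSpace ℝ (Fin n))
    (U : Set (EuclideanSpace ℝ (Fin n))) (hU : IsOpen U)
    (hseg : segment ℝ x (x + s) ⊆ U)
    (hsmooth : ContDiffOn ℝ p h U)
    (hlip : ∀ y ∈ segment ℝ x (x + s), ∀ z ∈ segment ℝ x (x + s),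
      ‖iteratedFDeriv ℝ p h y - iteratedFDeriv ℝ p h z‖ ≤
        (Nat.factorial (p - 1) : ℝ) * L * ‖y - z‖) :
    ‖fderiv ℝ h (x + s) -
      fderiv ℝ (fun v => ∑ j ∈ Finset.range (p + 1),
        (1 / (Nat.factorial j : ℝ)) * iteratedFDeriv ℝ j h x (fun _ => v)) s‖
      ≤ L * ‖s‖ ^ p := by
  obtain ⟨q, rfl⟩ : ∃ q, p = q + 1 := ⟨p - 1, (Nat.succ_pred_eq_of_pos hp).symm⟩
  have hxU : x ∈ U := hseg (left_mem_segment ℝ x (x + s))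
  set g := fderiv ℝ h with hgdef
  have hgC : ContDiffOn ℝ q g U := hsmooth.fderiv_of_isOpen hU (by norm_cast)
  have hfac : ((Nat.factorial q : ℝ)) ≠ 0 := Nat.cast_ne_zero.2 q.factorial_ne_zero
  have hrwg : ∀ y : EuclideanSpace ℝ (Fin n), iteratedFDeriv ℝ q g y =
      (continuousMultilinearCurryRightEquiv' ℝ q (EuclideanSpace ℝ (Fin n)) ℝ)
        (iteratedFDeriv ℝ (q+1) h y) := by
    intro y
    rw [iteratedFDeriv_succ_eq_comp_right, Function.comp_apply,
      LinearIsometryEquiv.apply_symm_apply]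
  have hlip' : ∀ y ∈ segment ℝ x (x + s), ∀ z ∈ segment ℝ x (x + s),
      ‖iteratedFDeriv ℝ q g y - iteratedFDeriv ℝ q g z‖
        ≤ ((Nat.factorial q : ℝ) * L) * ‖y - z‖ := by
    intro y hy z hz
    rw [hrwg y, hrwg z, ← dist_eq_norm, LinearIsometryEquiv.dist_map, dist_eq_norm]
    have := hlip y hy z hz
    simpa [Nat.add_sub_cancel] using this
  have happ := taylorAux hU x s hseg q g ((Nat.factorial q : ℝ) * L)
      (mul_nonneg (Nat.cast_nonneg _) hL) hgC hlip' 1 (by norm_num)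
  rw [one_smul] at happ
  simp only [one_pow] at happ
  have hT : fderiv ℝ (fun v => ∑ j ∈ Finset.range (q+1+1),
      (1 / (Nat.factorial j : ℝ)) * iteratedFDeriv ℝ j h x (fun _ => v)) s
      = ∑ k ∈ Finset.range (q+1),
        ((1:ℝ) / (Nat.factorial k : ℝ)) • iteratedFDeriv ℝ k g x (fun _ => s) := by
    have hder : HasFDerivAt (fun v => ∑ j ∈ Finset.range (q+1+1),
        (1 / (Nat.factorial j : ℝ)) * iteratedFDeriv ℝ j h x (fun _ => v))
        (∑ j ∈ Finset.range (q+1+1), (1 / (Nat.factorial j : ℝ)) •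
          (((iteratedFDeriv ℝ j h x).linearDeriv (fun _ => s)).comp
            (ContinuousLinearMap.pi (fun _ : Fin j => ContinuousLinearMap.id ℝ (EuclideanSpace ℝ (Fin n)))))) s := by
      apply HasFDerivAt.fun_sum
      intro j _
      refine HasFDerivAt.const_mul ?_ _
      have hΔ : HasFDerivAt (fun v : EuclideanSpace ℝ (Fin n) => (fun _ : Fin j => v))
          (ContinuousLinearMap.pi (fun _ : Fin j => ContinuousLinearMap.id ℝ (EuclideanSpace ℝ (Fin n)))) s :=
        (ContinuousLinearMap.pi (fun _ : Fin j => ContinuousLinearMap.id ℝ (EuclideanSpace ℝ (Fin n)))).hasFDerivAt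
      exact ((iteratedFDeriv ℝ j h x).hasFDerivAt (fun _ => s)).comp s hΔ
    rw [hder.fderiv]
    ext w
    rw [ContinuousLinearMap.sum_apply, ContinuousLinearMap.sum_apply]
    rw [Finset.sum_range_succ']
    have h0 : ((1 / (Nat.factorial 0 : ℝ)) •
        (((iteratedFDeriv ℝ 0 h x).linearDeriv (fun _ => s)).comp
          (ContinuousLinearMap.pi (fun _ : Fin 0 => ContinuousLinearMap.id ℝ (EuclideanSpace ℝ (Fin n)))))) w = 0 := by
      rw [ContinuousLinearMap.smul_apply, ContinuousLinearMap.comp_apply,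
        ContinuousMultilinearMap.linearDeriv_apply]
      simp
    rw [h0, add_zero]
    refine Finset.sum_congr rfl (fun k hk => ?_)
    rw [ContinuousLinearMap.smul_apply, ContinuousLinearMap.smul_apply,
      ContinuousLinearMap.comp_apply, ContinuousMultilinearMap.linearDeriv_apply]
    have hupd : ∀ i : Fin (k+1), Function.update (fun _ : Fin (k+1) => s) i
        ((ContinuousLinearMap.pi (fun _ : Fin (k+1) => ContinuousLinearMap.id ℝ (EuclideanSpace ℝ (Fin n)))) w i)
        = Function.update (fun _ : Fin (k+1) => s) i w := by
      intro i
      congr 1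
    simp_rw [hupd]
    have hks : ContDiffOn ℝ (k+1) h U := by
      apply hsmooth.of_le
      have := Nat.succ_le_succ (Nat.lt_succ_iff.1 (Finset.mem_range.1 hk))
      exact_mod_cast this
    rw [sumUpd hU hxU s w k h hks]
    rw [← hgdef, ← Nat.cast_smul_eq_nsmul ℝ, smul_smul]
    congr 1
    rw [Nat.factorial_succ]
    push_cast
    field_simp
  rw [hT]
  refine happ.trans (le_of_eq ?_)
  field_simp
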